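/- Let (θ_i)_{i≥1} be real numbers with |θ_i| ≤ c/n, and suppose that D_n = I + n^{−2(k+1)/(2k+3)}(a − qA) satisfies ‖D_n^p‖ ≤ C exp(−c₀ n^{−2(k+1)/(2k+3)} p) for every integer p ≥ 0, where c₀ > 0 and C > 0. If F_0 = 0 and F_i = F_{i−1} + (1/n) a F_{i−1} + θ_i q_n − (F_{i−1})_0 q_n for i ≥ 1, then the first coordinate of F_i satisfies |(F_i)_0| ≤ C c ‖q‖ (1 + c₀) c₀^{−1} n^{−1} for every i ≥ 1; in particular (F_i)_0² ≤ (C c ‖q‖ (1 + c₀)/c₀)² n^{−2}. -/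

import Mathlib

open Matrix
open scoped Matrix.Norms.L2Operator

private lemma coord_abs_le_norm {m : ℕ} (x : EuclideanSpace ℝ (Fin m)) (j : Fin m) :
    |x j| ≤ ‖x‖ := by
  rw [EuclideanSpace.norm_eq]
  have h1 : |x j| = Real.sqrt (‖x j‖ ^ 2) := by
    rw [Real.sqrt_sq_eq_abs, Real.norm_eq_abs, abs_abs]
  rw [h1]
  exact Real.sqrt_le_sqrt (Finset.single_le_sum (f := fun i => ‖x i‖ ^ 2)
    (fun i _ => by positivity) (Finset.mem_univ j))

theorem nuisance_perturbation_first_coordinate_bound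
    (k n : ℕ) (hn : 1 ≤ n)
    (q : EuclideanSpace ℝ (Fin (k + 1)))
    (qn : Fin (k + 1) → ℝ)
    (hqn : ∀ j, qn j
      = q j * (n : ℝ) ^ (-((2 * ((k : ℝ) + 1) - (j : ℕ)) / (2 * (k : ℝ) + 3))))
    (a qA Dn : Matrix (Fin (k + 1)) (Fin (k + 1)) ℝ)
    (ha : ∀ j l, a j l = if (l : ℕ) = (j : ℕ) + 1 then 1 else 0)
    (hqA : ∀ x : Fin (k + 1) → ℝ, qA.mulVec x = fun j => x 0 * q j)
    (hDn : Dn = 1 + (n : ℝ) ^ (-(2 * ((k : ℝ) + 1)) / (2 * (k : ℝ) + 3)) • (a - qA))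
    (c₀ C c : ℝ) (hc₀ : 0 < c₀) (hC : 0 < C)
    (hnorm : ∀ p : ℕ,
      ‖Dn ^ p‖ ≤ C * Real.exp (-c₀ * (n : ℝ) ^ (-(2 * ((k : ℝ) + 1)) / (2 * (k : ℝ) + 3)) * p))
    (θ : ℕ → ℝ) (hθ : ∀ i, 1 ≤ i → |θ i| ≤ c / n)
    (F : ℕ → Fin (k + 1) → ℝ) (hF0 : F 0 = 0)
    (hFrec : ∀ i, 1 ≤ i →
      F i = F (i - 1) + (1 / (n : ℝ)) • a.mulVec (F (i - 1))
              + θ i • qn - F (i - 1) 0 • qn) :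
    ∀ i, 1 ≤ i →
      |F i 0| ≤ C * c * ‖q‖ * (1 + c₀) * c₀⁻¹ * (n : ℝ)⁻¹ ∧
      (F i 0) ^ 2 ≤ (C * c * ‖q‖ * (1 + c₀) / c₀) ^ 2 * ((n : ℝ) ^ 2)⁻¹ := by
  have hn0 : (0 : ℝ) < n := by exact_mod_cast hn
  have hn1 : (1 : ℝ) ≤ n := by exact_mod_cast hn
  set d : ℝ := 2 * (k : ℝ) + 3 with hd
  have hd0 : (0 : ℝ) < d := by positivity
  set ε : ℝ := (n : ℝ) ^ (-(2 * ((k : ℝ) + 1)) / d) with hε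
  have hε0 : 0 < ε := Real.rpow_pos_of_pos hn0 _
  have hε1 : ε ≤ 1 := by
    apply Real.rpow_le_one_of_one_le_of_nonpos hn1
    apply div_nonpos_of_nonpos_of_nonneg
    · have : (0:ℝ) ≤ 2 * ((k:ℝ)+1) := by positivity
      linarith
    · linarith
  have hc : 0 ≤ c := by
    have h1 := hθ 1 le_rfl
    have h2 : (0:ℝ) ≤ c / n := le_trans (abs_nonneg _) h1
    calc (0:ℝ) = 0 * n := by ring
    _ ≤ (c / n) * n := by apply mul_le_mul_of_nonneg_right h2 (le_of_lt hn0)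
    _ = c := by field_simp
  have hmul : ∀ s t : ℝ, (n : ℝ) ^ s * (n : ℝ) ^ t = (n : ℝ) ^ (s + t) :=
    fun s t => (Real.rpow_add hn0 s t).symm
  -- rescaled vector
  set G : ℕ → EuclideanSpace ℝ (Fin (k + 1)) :=
    fun i => WithLp.toLp 2 (fun j => F i j * (n : ℝ) ^ (-((j : ℕ) : ℝ) / d)) with hG
  have hG0 : G 0 = 0 := by
    ext j; simp [hG, hF0]
  have hGfirst : ∀ i, G i 0 = F i 0 := by
    intro i
    show F i 0 * (n : ℝ) ^ (-(((0 : Fin (k+1)) : ℕ) : ℝ) / d) = F i 0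
    simp
  -- F in terms of G
  have hFG : ∀ i (l : Fin (k + 1)), F i l = G i l * (n : ℝ) ^ (((l : ℕ) : ℝ) * (1 / d)) := by
    intro i l
    show F i l = F i l * (n : ℝ) ^ (-((l : ℕ) : ℝ) / d) * (n : ℝ) ^ (((l : ℕ) : ℝ) * (1 / d))
    rw [mul_assoc, hmul]
    have : -((l : ℕ) : ℝ) / d + ((l : ℕ) : ℝ) * (1 / d) = 0 := by field_simp; ring
    rw [this, Real.rpow_zero, mul_one]
  -- scaling property of a
  have haS : ∀ (x : Fin (k + 1) → ℝ) (j : Fin (k + 1)),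
      a.mulVec (fun l => x l * (n : ℝ) ^ (((l : ℕ) : ℝ) * (1 / d))) j
        = (n : ℝ) ^ ((((j : ℕ) : ℝ) + 1) * (1 / d)) * a.mulVec x j := by
    intro x j
    simp only [Matrix.mulVec, dotProduct, ha, Finset.mul_sum]
    refine Finset.sum_congr rfl fun l _ => ?_
    by_cases h : (l : ℕ) = (j : ℕ) + 1
    · have hc : ((l : ℕ) : ℝ) = ((j : ℕ) : ℝ) + 1 := by exact_mod_cast h
      rw [if_pos h, hc]
      ring
    · rw [if_neg h]
      ring
  -- key recursion for G
  have key : ∀ i, 1 ≤ i →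
      G i = Matrix.toEuclideanLin Dn (G (i - 1)) + (θ i * ε) • q := by
    intro i hi
    have hFrec' := hFrec i hi
    ext j
    have hFj : F i j = F (i-1) j + (1 / (n : ℝ)) * a.mulVec (F (i-1)) j
        + θ i * qn j - F (i-1) 0 * qn j := by
      have := congrFun hFrec' j
      simpa using this
    have hDnx : Dn.mulVec (G (i-1)) j
        = G (i-1) j + ε * (a.mulVec (G (i-1)) j - G (i-1) 0 * q j) := by
      rw [hDn, Matrix.add_mulVec, Matrix.one_mulVec, Matrix.smul_mulVec,
        Matrix.sub_mulVec]
      simp only [Pi.add_apply, Pi.smul_apply, Pi.sub_apply, smul_eq_mul, hqA (G (i-1))]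
    show F i j * (n : ℝ) ^ (-((j : ℕ) : ℝ) / d)
        = Dn.mulVec (G (i-1)) j + (θ i * ε) * q j
    rw [hDnx, hFj]
    -- rewrite a-term
    have haF : a.mulVec (F (i-1)) j
        = (n : ℝ) ^ ((((j : ℕ) : ℝ) + 1) * (1 / d)) * a.mulVec (G (i-1)) j := by
      have : F (i-1) = fun l => G (i-1) l * (n : ℝ) ^ (((l : ℕ) : ℝ) * (1 / d)) := by
        funext l; exact hFG (i-1) l
      rw [this, haS]
    have hainv : (1 / (n : ℝ)) = (n : ℝ) ^ (-1 : ℝ) := by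
      rw [Real.rpow_neg_one, one_div]
    have hterm1 : (1 / (n : ℝ)) * a.mulVec (F (i-1)) j * (n : ℝ) ^ (-((j : ℕ) : ℝ) / d)
        = ε * a.mulVec (G (i-1)) j := by
      rw [haF, hainv]
      have : (n : ℝ) ^ (-1 : ℝ) * ((n : ℝ) ^ ((((j : ℕ) : ℝ) + 1) * (1 / d)) * a.mulVec (G (i-1)) j)
          * (n : ℝ) ^ (-((j : ℕ) : ℝ) / d)
          = ((n : ℝ) ^ (-1 : ℝ) * (n : ℝ) ^ ((((j : ℕ) : ℝ) + 1) * (1 / d))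
            * (n : ℝ) ^ (-((j : ℕ) : ℝ) / d)) * a.mulVec (G (i-1)) j := by ring
      rw [this, hmul, hmul]
      have hexp : -1 + (((j : ℕ) : ℝ) + 1) * (1 / d) + -((j : ℕ) : ℝ) / d
          = -(2 * ((k : ℝ) + 1)) / d := by
        rw [hd]; field_simp; ring
      rw [hexp]
    have hterm2 : qn j * (n : ℝ) ^ (-((j : ℕ) : ℝ) / d) = ε * q j := by
      rw [hqn j, mul_assoc, hmul]
      have hexp : -((2 * ((k : ℝ) + 1) - ((j : ℕ) : ℝ)) / (2 * (k : ℝ) + 3)) + -((j : ℕ) : ℝ) / d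
          = -(2 * ((k : ℝ) + 1)) / d := by
        rw [hd]; field_simp; ring
      rw [hexp]; ring
    have hG0' : F (i-1) 0 = G (i-1) 0 := (hGfirst (i-1)).symm
    have hGj : F (i-1) j * (n : ℝ) ^ (-((j : ℕ) : ℝ) / d) = G (i-1) j := rfl
    calc (F (i-1) j + 1 / (n:ℝ) * a.mulVec (F (i-1)) j + θ i * qn j - F (i-1) 0 * qn j)
          * (n : ℝ) ^ (-((j : ℕ) : ℝ) / d)
        = F (i-1) j * (n : ℝ) ^ (-((j : ℕ) : ℝ) / d)
          + (1 / (n:ℝ)) * a.mulVec (F (i-1)) j * (n : ℝ) ^ (-((j : ℕ) : ℝ) / d)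
          + θ i * (qn j * (n : ℝ) ^ (-((j : ℕ) : ℝ) / d))
          - F (i-1) 0 * (qn j * (n : ℝ) ^ (-((j : ℕ) : ℝ) / d)) := by ring
      _ = G (i-1) j + ε * a.mulVec (G (i-1)) j + θ i * (ε * q j) - G (i-1) 0 * (ε * q j) := by
          rw [hGj, hterm1, hterm2, hG0']
      _ = G (i-1) j + ε * (a.mulVec (G (i-1)) j - G (i-1) 0 * q j) + (θ i * ε) * q j := by ring
  -- closed-form solution
  have hTapp : ∀ (M : Matrix (Fin (k+1)) (Fin (k+1)) ℝ) (v : EuclideanSpace ℝ (Fin (k+1)))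
      (j : Fin (k+1)), Matrix.toEuclideanLin M v j = M.mulVec v j := fun _ _ _ => rfl
  have hTmul : ∀ (A B : Matrix (Fin (k+1)) (Fin (k+1)) ℝ) (v : EuclideanSpace ℝ (Fin (k+1))),
      Matrix.toEuclideanLin A (Matrix.toEuclideanLin B v) = Matrix.toEuclideanLin (A * B) v := by
    intro A B v
    ext j
    show (A *ᵥ (B *ᵥ (v : Fin (k+1) → ℝ))) j = ((A * B) *ᵥ (v : Fin (k+1) → ℝ)) j
    rw [Matrix.mulVec_mulVec]
  have hclosed : ∀ i, G i = ∑ m ∈ Finset.range i,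
      (θ (m+1) * ε) • Matrix.toEuclideanLin (Dn ^ (i-1-m)) q := by
    intro i
    induction i with
    | zero => simp [hG0]
    | succ i ih =>
      have h1 : G (i+1) = Matrix.toEuclideanLin Dn (G i) + (θ (i+1) * ε) • q := by
        have := key (i+1) (by omega)
        simpa using this
      rw [h1, ih, map_sum, Finset.sum_range_succ]
      congr 1
      · refine Finset.sum_congr rfl fun m hm => ?_
        rw [_root_.map_smul, hTmul, ← pow_succ']
        have : i - 1 - m + 1 = i + 1 - 1 - m := by
          have := Finset.mem_range.mp hm; omega
        rw [this]
      · have : i + 1 - 1 - i = 0 := by omega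
        rw [this, pow_zero]
        congr 1
        ext j
        rw [hTapp, Matrix.one_mulVec]
  -- geometric ratio
  set r : ℝ := Real.exp (-(c₀ * ε)) with hr
  have hr0 : 0 < r := Real.exp_pos _
  have hr1 : r < 1 := by
    apply Real.exp_lt_one_iff.mpr
    nlinarith
  have hnormT : ∀ p : ℕ, ‖Matrix.toEuclideanLin (Dn ^ p) q‖ ≤ C * r ^ p * ‖q‖ := by
    intro p
    have h1 : ‖Matrix.toEuclideanLin (Dn ^ p) q‖ ≤ ‖Dn ^ p‖ * ‖q‖ :=
      Matrix.l2_opNorm_mulVec (Dn ^ p) q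
    have h2 : ‖Dn ^ p‖ ≤ C * r ^ p := by
      have := hnorm p
      rwa [show -c₀ * ε * (p : ℝ) = (p : ℝ) * (-(c₀ * ε)) by ring, Real.exp_nat_mul, ← hr] at this
    calc ‖Matrix.toEuclideanLin (Dn ^ p) q‖ ≤ ‖Dn ^ p‖ * ‖q‖ := h1
      _ ≤ C * r ^ p * ‖q‖ := by
          apply mul_le_mul_of_nonneg_right h2 (norm_nonneg q)
  -- norm bound on G i
  have hGbound : ∀ i, ‖G i‖ ≤ (c / n) * ε * (C * ‖q‖) * (1 - r)⁻¹ := by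
    intro i
    rw [hclosed i]
    calc ‖∑ m ∈ Finset.range i, (θ (m+1) * ε) • Matrix.toEuclideanLin (Dn ^ (i-1-m)) q‖
        ≤ ∑ m ∈ Finset.range i, ‖(θ (m+1) * ε) • Matrix.toEuclideanLin (Dn ^ (i-1-m)) q‖ :=
          norm_sum_le _ _
      _ ≤ ∑ m ∈ Finset.range i, (c / n) * ε * (C * ‖q‖) * r ^ (i-1-m) := by
          refine Finset.sum_le_sum fun m hm => ?_
          rw [norm_smul]
          have hθm : |θ (m+1)| ≤ c / n := hθ (m+1) (by omega)
          have h0 : ‖θ (m+1) * ε‖ ≤ (c / n) * ε := by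
            rw [Real.norm_eq_abs, abs_mul, abs_of_pos hε0]
            exact mul_le_mul_of_nonneg_right hθm (le_of_lt hε0)
          calc ‖θ (m+1) * ε‖ * ‖Matrix.toEuclideanLin (Dn ^ (i-1-m)) q‖
              ≤ ((c / n) * ε) * (C * r ^ (i-1-m) * ‖q‖) := by
                apply mul_le_mul h0 (hnormT _) (norm_nonneg _)
                positivity
            _ = (c / n) * ε * (C * ‖q‖) * r ^ (i-1-m) := by ring
      _ = (c / n) * ε * (C * ‖q‖) * ∑ m ∈ Finset.range i, r ^ (i-1-m) := by
          rw [Finset.mul_sum]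
      _ = (c / n) * ε * (C * ‖q‖) * ∑ m ∈ Finset.range i, r ^ m := by
          rw [Finset.sum_range_reflect (fun m => r ^ m) i]
      _ ≤ (c / n) * ε * (C * ‖q‖) * (1 - r)⁻¹ := by
          apply mul_le_mul_of_nonneg_left _ (by positivity)
          have hpos : (0:ℝ) < 1 - r := by linarith
          have h1 : (∑ m ∈ Finset.range i, r ^ m) * (1 - r) = 1 - r ^ i := by
            linear_combination (-1 : ℝ) * geom_sum_mul r i
          rw [← mul_le_mul_iff_left₀ hpos, inv_mul_cancel₀ (ne_of_gt hpos), h1]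
          have hge : (0:ℝ) ≤ r ^ i := by positivity
          linarith
  -- final bounds
  intro i hi
  have habs : |F i 0| ≤ (c / n) * ε * (C * ‖q‖) * (1 - r)⁻¹ := by
    rw [← hGfirst i]
    exact le_trans (coord_abs_le_norm (G i) 0) (hGbound i)
  have hx : 0 < c₀ * ε := by positivity
  have hexp : r ≤ (1 + c₀ * ε)⁻¹ := by
    rw [hr, Real.exp_neg]
    apply inv_anti₀ (by linarith)
    have h := Real.add_one_le_exp (c₀ * ε)
    linarith
  have h1r : (c₀ * ε) / (1 + c₀ * ε) ≤ 1 - r := by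
    have h2 : (c₀ * ε) / (1 + c₀ * ε) = 1 - (1 + c₀ * ε)⁻¹ := by
      field_simp; ring
    linarith
  have h1rpos : (0:ℝ) < 1 - r := by
    have := Real.exp_lt_one_iff.mpr (show -(c₀ * ε) < 0 by linarith)
    rw [← hr] at this
    linarith
  have hfrac : ε * (1 - r)⁻¹ ≤ (1 + c₀) * c₀⁻¹ := by
    have h4 : c₀ * ε ≤ (1 - r) * (1 + c₀ * ε) := by
      have h5 := mul_le_mul_of_nonneg_right h1r (show (0:ℝ) ≤ 1 + c₀ * ε by linarith)
      rwa [div_mul_cancel₀ _ (show (1 + c₀ * ε) ≠ 0 by linarith)] at h5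
    have h6 : ε / (1 - r) ≤ (1 + c₀) / c₀ := by
      rw [div_le_div_iff₀ h1rpos hc₀]
      have h8 : c₀ * ε ≤ c₀ * 1 := mul_le_mul_of_nonneg_left hε1 hc₀.le
      have h7 : 0 ≤ (1 - r) * (c₀ - c₀ * ε) :=
        mul_nonneg h1rpos.le (by linarith)
      calc ε * c₀ = c₀ * ε := mul_comm _ _
        _ ≤ (1 - r) * (1 + c₀ * ε) := h4
        _ = (1 + c₀) * (1 - r) - (1 - r) * (c₀ - c₀ * ε) := by ring
        _ ≤ (1 + c₀) * (1 - r) := by linarith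
    rwa [div_eq_mul_inv, div_eq_mul_inv] at h6
  have hmain : |F i 0| ≤ C * c * ‖q‖ * (1 + c₀) * c₀⁻¹ * (n:ℝ)⁻¹ := by
    calc |F i 0| ≤ (c / n) * ε * (C * ‖q‖) * (1 - r)⁻¹ := habs
      _ = (c / n) * (C * ‖q‖) * (ε * (1 - r)⁻¹) := by ring
      _ ≤ (c / n) * (C * ‖q‖) * ((1 + c₀) * c₀⁻¹) :=
          mul_le_mul_of_nonneg_left hfrac (by positivity)
      _ = C * c * ‖q‖ * (1 + c₀) * c₀⁻¹ * (n:ℝ)⁻¹ := by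
          rw [div_eq_mul_inv]
          ring
  refine ⟨hmain, ?_⟩
  calc (F i 0) ^ 2 = |F i 0| ^ 2 := (sq_abs _).symm
    _ ≤ (C * c * ‖q‖ * (1 + c₀) * c₀⁻¹ * (n:ℝ)⁻¹) ^ 2 :=
        pow_le_pow_left₀ (abs_nonneg _) hmain 2
    _ = (C * c * ‖q‖ * (1 + c₀) / c₀) ^ 2 * ((n:ℝ) ^ 2)⁻¹ := by
        rw [div_eq_mul_inv]
        ring
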